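/- arXiv:1312.3401 — 2 statements merged into one kernel-verified Lean document; each statement's English description precedes it below -/
import Mathlib

section
/- The set of subtrees of a fixed tree has the Helly property: if a family of subtrees of a tree pairwise intersect (share a vertex), then there is a vertex common to all of them. -/
open SimpleGraph

namespace TWPaper

/-- `(T, B)` is a tree decomposition of `G`. -/
def IsTreeDecomp {V ι : Type*} (G : SimpleGraph V) (T : SimpleGraph ι) (B : ι → Set V) : Prop :=
  T.IsTree ∧
  (∀ v w : V, G.Adj v w → ∃ x, v ∈ B x ∧ w ∈ B x) ∧
  (∀ v : V, (T.induce {x | v ∈ B x}).Connected)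

/-- `G` has a tree decomposition of width at most `k`. -/
def HasTDWidthLE {V : Type*} (G : SimpleGraph V) (k : ℕ) : Prop :=
  ∃ (ι : Type) (T : SimpleGraph ι) (B : ι → Set V),
    IsTreeDecomp G T B ∧ ∀ x, (B x).ncard ≤ k + 1

/-- Treewidth of `G`. -/
noncomputable def treewidth {V : Type*} (G : SimpleGraph V) : ℕ :=
  sInf {k | HasTDWidthLE G k}

/-- Two vertex sets touch: they intersect or an edge joins them. -/
def Touches {V : Type*} (G : SimpleGraph V) (A B : Set V) : Prop :=
  (A ∩ B).Nonempty ∨ ∃ a ∈ A, ∃ b ∈ B, G.Adj a b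

/-- A bramble: a set of connected subgraphs (given by vertex sets) that pairwise touch. -/
def IsBramble {V : Type*} (G : SimpleGraph V) (𝓑 : Set (Set V)) : Prop :=
  (∀ A ∈ 𝓑, (G.induce A).Connected) ∧ ∀ A ∈ 𝓑, ∀ B ∈ 𝓑, Touches G A B

/-- `S` hits every element of `𝓑`. -/
def IsHitting {V : Type*} (𝓑 : Set (Set V)) (S : Set V) : Prop :=
  ∀ A ∈ 𝓑, (S ∩ A).Nonempty

/-- The order of a bramble: minimum size of a hitting set. -/
noncomputable def brambleOrder {V : Type*} (𝓑 : Set (Set V)) : ℕ :=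
  sInf {n | ∃ S : Set V, IsHitting 𝓑 S ∧ S.ncard = n}

/-- The bramble number: maximum order of a bramble. -/
noncomputable def brambleNumber {V : Type*} (G : SimpleGraph V) : ℕ :=
  sSup {n | ∃ 𝓑 : Set (Set V), IsBramble G 𝓑 ∧ brambleOrder 𝓑 = n}

/-- A tangle: connected subgraphs such that any three share a vertex or
meet a common edge's endpoints. -/
def IsTangle {V : Type*} (G : SimpleGraph V) (τ : Set (Set V)) : Prop :=
  (∀ A ∈ τ, (G.induce A).Connected) ∧
  ∀ A ∈ τ, ∀ B ∈ τ, ∀ C ∈ τ,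
    (∃ v, v ∈ A ∩ B ∩ C) ∨
    ∃ u v, G.Adj u v ∧ (u ∈ A ∨ v ∈ A) ∧ (u ∈ B ∨ v ∈ B) ∧ (u ∈ C ∨ v ∈ C)

/-- The tangle number: maximum order of a tangle. -/
noncomputable def tangleNumber {V : Type*} (G : SimpleGraph V) : ℕ :=
  sSup {n | ∃ τ : Set (Set V), IsTangle G τ ∧ brambleOrder τ = n}

/-- `G - X` : delete the vertices of `X` (kept on the same vertex type,
vertices of `X` become isolated). -/
def delVerts {V : Type*} (G : SimpleGraph V) (X : Set V) : SimpleGraph V where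
  Adj a b := G.Adj a b ∧ a ∉ X ∧ b ∉ X
  symm := by
    constructor
    intro a b h
    exact ⟨h.1.symm, h.2.2, h.2.1⟩
  loopless := by
    constructor
    intro a h
    exact G.irrefl h.1

/-- The vertex set of the component of `G - X` containing `v`. -/
def comp {V : Type*} (G : SimpleGraph V) (X : Set V) (v : V) : Set V :=
  {w | (delVerts G X).Reachable v w}

/-- `X` is a `(k, S, c)`-separator of `G`. -/
def IsSeparator {V : Type*} (G : SimpleGraph V) (k : ℕ) (S : Set V) (c : ℝ) (X : Set V) : Prop :=
  X.ncard ≤ k ∧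
  ∀ v ∉ X, ((comp G X v ∩ S).ncard : ℝ) ≤ c * ((S \ X).ncard : ℝ)

/-- The separation number `sep_c(G)`. -/
noncomputable def sepNum {V : Type*} (G : SimpleGraph V) (c : ℝ) : ℕ :=
  sInf {k | ∀ S : Set V, ∃ X : Set V, IsSeparator G k S c X}

/-- `X` is a `(k, S, c)*`-separator of `G`. -/
def IsStarSeparator {V : Type*} (G : SimpleGraph V) (k : ℕ) (S : Set V) (c : ℝ) (X : Set V) :
    Prop :=
  X.ncard ≤ k ∧
  ∀ v ∉ X, ((comp G X v ∩ (S \ X)).ncard : ℝ) ≤ c * (S.ncard : ℝ)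

/-- The variant separation number `sep*_c(G)`. -/
noncomputable def sepStarNum {V : Type*} (G : SimpleGraph V) (c : ℝ) : ℕ :=
  sInf {k | ∀ S : Set V, ∃ X : Set V, IsStarSeparator G k S c X}

/-- `G` has a branch decomposition of width at most `w`. -/
def HasBDWidthLE {V : Type*} (G : SimpleGraph V) (w : ℕ) : Prop :=
  ∃ (ι : Type) (_ : Finite ι) (T : SimpleGraph ι), T.IsTree ∧
    (∀ x : ι, (T.neighborSet x).ncard = 3 ∨ (T.neighborSet x).ncard = 1) ∧
    ∃ θ : G.edgeSet ≃ {x : ι // (T.neighborSet x).ncard = 1},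
      ∀ a b : ι, T.Adj a b →
        {v : V | ∃ e₁ e₂ : G.edgeSet, v ∈ e₁.1 ∧ v ∈ e₂.1 ∧
          ¬ (T.deleteEdges {s(a, b)}).Reachable (θ e₁).1 (θ e₂).1}.ncard ≤ w

/-- Branchwidth of `G` (`0` if no branch decomposition exists). -/
noncomputable def branchwidth {V : Type*} (G : SimpleGraph V) : ℕ :=
  sInf {w | HasBDWidthLE G w}

/-- `H` is a minor of `G`, via a model of branch sets. -/
def IsMinor {W V : Type*} (H : SimpleGraph W) (G : SimpleGraph V) : Prop :=
  ∃ f : W → Set V,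
    (∀ w, (G.induce (f w)).Connected) ∧
    (∀ a b, a ≠ b → Disjoint (f a) (f b)) ∧
    ∀ a b, H.Adj a b → ∃ u ∈ f a, ∃ v ∈ f b, G.Adj u v

/-- The lexicographic product `T[K_k]`. -/
def treeLex {ι : Type*} (T : SimpleGraph ι) (k : ℕ) : SimpleGraph (ι × Fin k) where
  Adj a b := T.Adj a.1 b.1 ∨ (a.1 = b.1 ∧ a.2 ≠ b.2)
  symm := by
    constructor
    rintro a b (h | ⟨h1, h2⟩)
    · exact Or.inl h.symm
    · exact Or.inr ⟨h1.symm, h2.symm⟩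
  loopless := by
    constructor
    rintro a (h | ⟨h1, h2⟩)
    · exact T.irrefl h
    · exact h2 rfl

/-- The lexicographic tree product number. -/
noncomputable def ltp {V : Type*} (G : SimpleGraph V) : ℕ :=
  sInf {k | ∃ (ι : Type) (T : SimpleGraph ι), T.IsTree ∧ IsMinor G (treeLex T k)}

/-- The cartesian tree product number. -/
noncomputable def ctp {V : Type*} (G : SimpleGraph V) : ℕ :=
  sInf {k | ∃ (ι : Type) (T : SimpleGraph ι), T.IsTree ∧
    IsMinor G (T.boxProd (completeGraph (Fin k)))}

/-- `S` is `k`-linked in `G`. -/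
def IsLinked {V : Type*} (G : SimpleGraph V) (k : ℕ) (S : Set V) : Prop :=
  ∀ X : Set V, X.ncard < k → ∃ v, v ∉ X ∧ S.ncard < 2 * (comp G X v ∩ S).ncard

/-- The linkedness of `G`: maximum `k ≥ 1` for which `G` has a `k`-linked set. -/
noncomputable def linkedness {V : Type*} (G : SimpleGraph V) : ℕ :=
  sSup {k | 0 < k ∧ ∃ S : Set V, IsLinked G k S}

/-- `S` is well-linked in `G`. -/
def WellLinked {V : Type*} (G : SimpleGraph V) (S : Set V) : Prop :=
  ∀ A B : Finset V, ↑A ⊆ S → ↑B ⊆ S → A.card = B.card →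
    ∃ (σ : A ≃ B) (p : ∀ a : A, G.Walk (a : V) ((σ a : V))),
      (∀ a, (p a).IsPath) ∧
      ∀ a a' : A, a ≠ a' → ∀ v, v ∈ (p a).support → v ∉ (p a').support

/-- `S` is externally-well-linked in `G`: the linking paths can be chosen with
no internal vertices in `S`. -/
def ExternallyWellLinked {V : Type*} (G : SimpleGraph V) (S : Set V) : Prop :=
  ∀ A B : Finset V, ↑A ⊆ S → ↑B ⊆ S → A.card = B.card →
    ∃ (σ : A ≃ B) (p : ∀ a : A, G.Walk (a : V) ((σ a : V))),
      (∀ a, (p a).IsPath) ∧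
      (∀ a a' : A, a ≠ a' → ∀ v, v ∈ (p a).support → v ∉ (p a').support) ∧
      ∀ a : A, ∀ v ∈ (p a).support, v ∈ S → v = (a : V) ∨ v = ((σ a : V))

/-- The well-linked number of `G`. -/
noncomputable def wellLinkedNum {V : Type*} (G : SimpleGraph V) : ℕ :=
  sSup {n | ∃ S : Set V, WellLinked G S ∧ S.ncard = n}

/-- A graph is chordal if every cycle of length at least 4 has a chord
(equivalently, there is no induced cycle of length at least four). -/
def Chordal {V : Type*} (H : SimpleGraph V) : Prop :=
  ∀ (v : V) (c : H.Walk v v), c.IsCycle → 4 ≤ c.length →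
    ∃ a b, a ∈ c.support ∧ b ∈ c.support ∧ H.Adj a b ∧ s(a, b) ∉ c.edges

/-- `G` is a `k`-tree. -/
inductive IsKTree (k : ℕ) : ∀ (V : Type), SimpleGraph V → Prop
  | base (V : Type) (G : SimpleGraph V) (h : Nonempty (G ≃g completeGraph (Fin (k + 1)))) :
      IsKTree k V G
  | step (V : Type) (G : SimpleGraph V) (v : V)
      (hdeg : (G.neighborSet v).ncard = k)
      (hcl : G.IsClique (G.neighborSet v))
      (h : IsKTree k ↥{u : V | u ≠ v} (G.induce {u : V | u ≠ v})) :
      IsKTree k V G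

/-- The `k × k` grid graph. -/
def grid (k : ℕ) : SimpleGraph (Fin k × Fin k) where
  Adj a b := (a.1 = b.1 ∧ (a.2.val + 1 = b.2.val ∨ b.2.val + 1 = a.2.val)) ∨
             (a.2 = b.2 ∧ (a.1.val + 1 = b.1.val ∨ b.1.val + 1 = a.1.val))
  symm := by
    constructor
    rintro a b (⟨h1, h2⟩ | ⟨h1, h2⟩)
    · exact Or.inl ⟨h1.symm, h2.symm⟩
    · exact Or.inr ⟨h1.symm, h2.symm⟩
  loopless := by
    constructor
    rintro a (⟨h1, h2⟩ | ⟨h1, h2⟩) <;> omega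

section HellyHelpers
variable {ι : Type} {T : SimpleGraph ι}




lemma reach_induce {X : Set ι} : ∀ {a b : ι} (w : T.Walk a b)
    (hs : ∀ v ∈ w.support, v ∈ X) (ha : a ∈ X) (hb : b ∈ X),
    (T.induce X).Reachable ⟨a, ha⟩ ⟨b, hb⟩ := by
  intro a b w
  induction w with
  | nil => intro _ _ _; rfl
  | @cons a c b h p ih =>
    intro hs ha hb
    have hc : c ∈ X := hs c (by simp)
    have : (T.induce X).Adj ⟨a, ha⟩ ⟨c, hc⟩ := h
    exact this.reachable.trans (ih (fun v hv => hs v (by simp [hv])) hc hb)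

/-- From induced connectivity, get a T-path with support in `s`. -/
lemma exists_path_subset {s : Set ι} (hc : (T.induce s).Connected)
    {a b : ι} (ha : a ∈ s) (hb : b ∈ s) :
    ∃ p : T.Walk a b, p.IsPath ∧ ∀ v ∈ p.support, v ∈ s := by
  classical
  obtain ⟨w⟩ := hc.preconnected ⟨a, ha⟩ ⟨b, hb⟩
  let w' : T.Walk a b := w.map (SimpleGraph.Embedding.induce s).toHom
  refine ⟨w'.bypass, w'.bypass_isPath, fun v hv => ?_⟩
  have := w'.support_bypass_subset hv
  rw [show w'.support = w.support.map (SimpleGraph.Embedding.induce s).toHom from Walk.support_map _ _] at this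
  obtain ⟨⟨u, hu⟩, _, rfl⟩ := List.mem_map.mp this
  exact hu

lemma convex (hT : T.IsTree) {s : Set ι} (hc : (T.induce s).Connected)
    {a b : ι} (ha : a ∈ s) (hb : b ∈ s) {p : T.Walk a b} (hp : p.IsPath) :
    ∀ v ∈ p.support, v ∈ s := by
  obtain ⟨q, hq, hqs⟩ := exists_path_subset hc ha hb
  have : p = q := (hT.existsUnique_path a b).unique hp hq
  subst this; exact hqs




lemma first_hit (S : Set ι) : ∀ {c a : ι} (w : T.Walk c a), a ∈ S → w.IsPath →
    ∃ (m : ι) (_ : m ∈ S) (w' : T.Walk c m),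
      w'.IsPath ∧ w'.support ⊆ w.support ∧ (∀ v ∈ w'.support, v ∈ S → v = m) := by
  intro c a w
  induction w with
  | nil =>
    intro ha _
    exact ⟨_, ha, Walk.nil, Walk.IsPath.nil, by simp, by simp⟩
  | @cons c d a h p ih =>
    intro ha hp
    by_cases hc : c ∈ S
    · exact ⟨c, hc, Walk.nil, Walk.IsPath.nil, by simp, by simp⟩
    · obtain ⟨m, hmS, w', hw'p, hw'sub, hw'only⟩ := ih ha hp.of_cons
      refine ⟨m, hmS, Walk.cons h w', ?_, ?_, ?_⟩
      · rw [Walk.cons_isPath_iff]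
        exact ⟨hw'p, fun hcmem => ((Walk.cons_isPath_iff _ _).mp hp).2 (hw'sub hcmem)⟩
      · intro v hv
        rw [Walk.support_cons] at hv ⊢
        rcases List.mem_cons.mp hv with rfl | hv'
        · exact List.mem_cons_self
        · exact List.mem_cons_of_mem _ (hw'sub hv')
      · intro v hv hvS
        rw [Walk.support_cons] at hv
        rcases List.mem_cons.mp hv with rfl | hv'
        · exact absurd hvS hc
        · exact hw'only v hv' hvS

lemma median (hT : T.IsTree) (a b c : ι) :
    ∃ m : ι, (∀ p : T.Walk a b, p.IsPath → m ∈ p.support) ∧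
      (∀ q : T.Walk b c, q.IsPath → m ∈ q.support) ∧
      (∀ r : T.Walk c a, r.IsPath → m ∈ r.support) := by
  classical
  obtain ⟨P, hP, hPu⟩ := hT.existsUnique_path a b
  obtain ⟨R, hR, hRu⟩ := hT.existsUnique_path c a
  obtain ⟨m, hmP, w', hw'p, hw'sub, hw'only⟩ :=
    first_hit {v | v ∈ P.support} R (by simp) hR
  have hmP' : m ∈ P.support := hmP
  -- build path from c to b through m
  have hP2 : (P.dropUntil m hmP').IsPath := hP.dropUntil hmP'
  have hW : (w'.append (P.dropUntil m hmP')).IsPath := by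
    rw [Walk.isPath_def, Walk.support_append]
    refine List.Nodup.append hw'p.support_nodup ?_ ?_
    · exact hP2.support_nodup.tail
    · intro v hv hv'
      have hvP : v ∈ P.support :=
        Walk.support_dropUntil_subset P hmP' (List.mem_of_mem_tail hv')
      have : v = m := hw'only v hv hvP
      subst this
      have := hP2.support_nodup
      rw [Walk.support_eq_cons] at this
      exact (List.nodup_cons.mp this).1 hv'
  refine ⟨m, ?_, ?_, ?_⟩
  · intro p hp; rwa [hPu p hp]
  · intro q hq
    have hq' : q.reverse.IsPath := hq.reverse
    obtain ⟨Q, hQ, hQu⟩ := hT.existsUnique_path c b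
    have h1 : q.reverse = Q := hQu _ hq'
    have h2 : w'.append (P.dropUntil m hmP') = Q := hQu _ hW
    have : m ∈ q.reverse.support := by
      rw [h1, ← h2, Walk.mem_support_append_iff]
      exact Or.inl w'.end_mem_support
    rwa [Walk.support_reverse, List.mem_reverse] at this
  · intro r hr; rw [hRu r hr]; exact hw'sub w'.end_mem_support

lemma path_between (hT : T.IsTree) (a b : ι) : ∃ p : T.Walk a b, p.IsPath := by
  classical
  obtain ⟨w⟩ := hT.isConnected.preconnected a b
  exact ⟨w.bypass, w.bypass_isPath⟩

lemma inter3 (hT : T.IsTree) {s t u : Set ι}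
    (hs : (T.induce s).Connected) (ht : (T.induce t).Connected)
    (hu : (T.induce u).Connected)
    (hst : (s ∩ t).Nonempty) (htu : (t ∩ u).Nonempty) (hus : (u ∩ s).Nonempty) :
    (s ∩ t ∩ u).Nonempty := by
  obtain ⟨a, has, hat⟩ := hst
  obtain ⟨b, hbt, hbu⟩ := htu
  obtain ⟨c, hcu, hcs⟩ := hus
  obtain ⟨m, hmab, hmbc, hmca⟩ := median hT a b c
  obtain ⟨p, hp⟩ := path_between hT a b
  obtain ⟨q, hq⟩ := path_between hT b c
  obtain ⟨r, hr⟩ := path_between hT c a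
  exact ⟨m, ⟨convex hT hs hcs has hr m (hmca r hr),
    convex hT ht hat hbt hp m (hmab p hp)⟩,
    convex hT hu hbu hcu hq m (hmbc q hq)⟩

lemma inter_conn (hT : T.IsTree) {s t : Set ι}
    (hs : (T.induce s).Connected) (ht : (T.induce t).Connected)
    (hne : (s ∩ t).Nonempty) : (T.induce (s ∩ t)).Connected := by
  obtain ⟨z, hz⟩ := hne
  haveI : Nonempty ↑(s ∩ t) := ⟨⟨z, hz⟩⟩
  refine ⟨fun x y => ?_⟩
  obtain ⟨a, ha⟩ := x
  obtain ⟨b, hb⟩ := y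
  obtain ⟨p, hp, _⟩ := exists_path_subset hs ha.1 hb.1
  have hsub : ∀ v ∈ p.support, v ∈ s ∩ t :=
    fun v hv => ⟨convex hT hs ha.1 hb.1 hp v hv, convex hT ht ha.2 hb.2 hp v hv⟩
  exact reach_induce p hsub ha hb

lemma helly_aux (hT : T.IsTree) :
    ∀ n (F : Set (Set ι)), F.Finite → F.ncard = n →
    (∀ s ∈ F, (T.induce s).Connected) →
    (∀ s ∈ F, ∀ t ∈ F, (s ∩ t).Nonempty) →
    F.Nonempty → ∃ x : ι, ∀ s ∈ F, x ∈ s := by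
  intro n
  induction n using Nat.strong_induction_on with
  | _ n IH =>
    intro F hfin hn hconn hpair hne
    by_cases hex : ∃ s ∈ F, ∃ t ∈ F, s ≠ t
    · obtain ⟨s, hsF, t, htF, hst⟩ := hex
      set F' : Set (Set ι) := insert (s ∩ t) (F \ {s, t}) with hF'
      have hstF : ({s, t} : Set (Set ι)) ⊆ F := by
        intro x hx; rcases hx with rfl | rfl; exact hsF; exact htF
      have hcard2 : ({s, t} : Set (Set ι)).ncard = 2 := by
        rw [Set.ncard_pair hst]
      have hdiff : (F \ {s, t}).ncard = n - 2 := by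
        rw [Set.ncard_diff hstF, hcard2, hn]
      have hn2 : 2 ≤ n := by
        rw [← hn, ← hcard2]; exact Set.ncard_le_ncard hstF hfin
      have hlt : F'.ncard < n := by
        calc F'.ncard ≤ (F \ {s, t}).ncard + 1 :=
              Set.ncard_insert_le _ _
          _ = n - 2 + 1 := by rw [hdiff]
          _ < n := by omega
      have hconn' : ∀ u ∈ F', (T.induce u).Connected := by
        rintro u hu
        rcases hu with rfl | ⟨huF, _⟩
        · exact inter_conn hT (hconn s hsF) (hconn t htF) (hpair s hsF t htF)
        · exact hconn u huF
      have hkey : ∀ u ∈ F, ((s ∩ t) ∩ u).Nonempty := by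
        intro u huF
        exact inter3 hT (hconn s hsF) (hconn t htF) (hconn u huF)
          (hpair s hsF t htF) (hpair t htF u huF) (hpair u huF s hsF)
      have hpair' : ∀ u ∈ F', ∀ v ∈ F', (u ∩ v).Nonempty := by
        rintro u hu v hv
        rcases hu with rfl | ⟨huF, _⟩ <;> rcases hv with rfl | ⟨hvF, _⟩
        · rw [Set.inter_self]; exact hpair s hsF t htF
        · exact hkey v hvF
        · rw [Set.inter_comm]; exact hkey u huF
        · exact hpair u huF v hvF
      obtain ⟨x, hx⟩ := IH F'.ncard hlt F'
        (hfin.diff.insert _) rfl hconn' hpair' ⟨_, Set.mem_insert _ _⟩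
      refine ⟨x, fun u huF => ?_⟩
      by_cases hus : u = s
      · subst hus; exact (hx _ (Set.mem_insert _ _)).1
      by_cases hut : u = t
      · subst hut; exact (hx _ (Set.mem_insert _ _)).2
      · exact hx u (Set.mem_insert_of_mem _ ⟨huF, by simp [hus, hut]⟩)
    · push_neg at hex
      obtain ⟨s, hsF⟩ := hne
      obtain ⟨x, hx, _⟩ := hpair s hsF s hsF
      exact ⟨x, fun u huF => (hex s hsF u huF).symm ▸ hx⟩


end HellyHelpers

/-- Helly property of subtrees of a tree. -/
theorem helly_subtrees {ι : Type} [Fintype ι] (T : SimpleGraph ι) (hT : T.IsTree)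
    (F : Set (Set ι))
    (hconn : ∀ s ∈ F, (T.induce s).Connected)
    (hpair : ∀ s ∈ F, ∀ t ∈ F, (s ∩ t).Nonempty) :
    ∃ x : ι, ∀ s ∈ F, x ∈ s := by
  rcases F.eq_empty_or_nonempty with rfl | hne
  · obtain ⟨x⟩ := hT.isConnected.nonempty
    exact ⟨x, by simp⟩
  · exact helly_aux hT F.ncard F (Set.toFinite F) rfl hconn hpair hne


end TWPaper
end

section
/- For every graph G, link(G) <= bn(G) <= 2·link(G). -/
open SimpleGraph

namespace TWPaper

section AuxLemmas

variable {V : Type} [Fintype V] (G : SimpleGraph V)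

lemma not_mem_X_of_walk {X : Set V} : ∀ {a b : V}, (delVerts G X).Walk a b → a ∉ X → b ∉ X := by
  intro a b w
  induction w with
  | nil => exact id
  | cons h _ ih => exact fun _ => ih h.2.2

lemma mem_comp_self (X : Set V) (v : V) : v ∈ comp G X v := Reachable.refl v

lemma comp_not_mem_X {X : Set V} {v w : V} (hv : v ∉ X) (hw : w ∈ comp G X v) : w ∉ X := by
  obtain ⟨p⟩ := hw
  exact not_mem_X_of_walk G p hv

lemma induce_reach_of_walk {X : Set V} {v : V} :
    ∀ {a b : V} (_ : (delVerts G X).Walk a b) (ha : a ∈ comp G X v) (hb : b ∈ comp G X v),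
      (G.induce (comp G X v)).Reachable ⟨a, ha⟩ ⟨b, hb⟩ := by
  intro a b w
  induction w with
  | nil => intro ha hb; exact Reachable.refl _
  | @cons a c b h p ih =>
      intro ha hb
      have hc : c ∈ comp G X v := Reachable.trans ha h.reachable
      have hadj : (G.induce (comp G X v)).Adj ⟨a, ha⟩ ⟨c, hc⟩ := h.1
      exact hadj.reachable.trans (ih hc hb)

lemma comp_connected (X : Set V) (v : V) : (G.induce (comp G X v)).Connected := by
  have : Nonempty ↑(comp G X v) := ⟨⟨v, mem_comp_self G X v⟩⟩
  refine SimpleGraph.Connected.mk ?_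
  rintro ⟨a, ha⟩ ⟨b, hb⟩
  obtain ⟨p⟩ : (delVerts G X).Reachable a b := (Reachable.symm ha).trans hb
  exact induce_reach_of_walk G p ha hb

lemma reach_of_induce {X A : Set V} (hAX : ∀ a ∈ A, a ∉ X) :
    ∀ {a b : ↥A}, (G.induce A).Walk a b → (delVerts G X).Reachable a.1 b.1 := by
  intro a b w
  induction w with
  | nil => exact Reachable.refl _
  | @cons a c b h _ ih =>
      have hadj : (delVerts G X).Adj a.1 c.1 := ⟨h, hAX _ a.2, hAX _ c.2⟩
      exact hadj.reachable.trans ih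

lemma subset_comp {X A : Set V} (hA : (G.induce A).Connected) (hAX : ∀ a ∈ A, a ∉ X)
    {u : V} (hu : u ∈ A) : A ⊆ comp G X u := by
  intro b hb
  obtain ⟨p⟩ := hA.preconnected ⟨u, hu⟩ ⟨b, hb⟩
  exact reach_of_induce G hAX p

lemma linked_le_card {k : ℕ} {S : Set V} (h : IsLinked G k S) : k ≤ Fintype.card V := by
  by_contra hk
  push_neg at hk
  obtain ⟨v, hv, -⟩ := h Set.univ (by rw [Set.ncard_univ, Nat.card_eq_fintype_card]; exact hk)
  exact hv (Set.mem_univ v)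

lemma linkedness_bddAbove : BddAbove {k | 0 < k ∧ ∃ S : Set V, IsLinked G k S} := by
  refine ⟨Fintype.card V, ?_⟩
  rintro k ⟨-, S, hS⟩
  exact linked_le_card G hS

lemma brambleOrder_le_card {𝓑 : Set (Set V)} (h : IsBramble G 𝓑) :
    brambleOrder 𝓑 ≤ Fintype.card V := by
  refine Nat.sInf_le ⟨Set.univ, ?_, by rw [Set.ncard_univ, Nat.card_eq_fintype_card]⟩
  intro A hA
  rw [Set.univ_inter]
  exact Set.nonempty_coe_sort.mp (h.1 A hA).nonempty

lemma brambleNumber_bddAbove :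
    BddAbove {n | ∃ 𝓑 : Set (Set V), IsBramble G 𝓑 ∧ brambleOrder 𝓑 = n} := by
  refine ⟨Fintype.card V, ?_⟩
  rintro n ⟨𝓑, h, rfl⟩
  exact brambleOrder_le_card G h

end AuxLemmas

/-- link(G) ≤ bn(G) ≤ 2·link(G). -/
theorem linkedness_bramble_bounds {V : Type} [Fintype V] (G : SimpleGraph V) :
    linkedness G ≤ brambleNumber G ∧ brambleNumber G ≤ 2 * linkedness G := by
  constructor
  · -- link(G) ≤ bn(G)
    by_cases hne : {k | 0 < k ∧ ∃ S : Set V, IsLinked G k S}.Nonempty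
    · refine csSup_le hne ?_
      rintro k ⟨hk, S, hS⟩
      set 𝓑 : Set (Set V) :=
        {A | ∃ X v, v ∉ X ∧ A = comp G X v ∧ S.ncard < 2 * (A ∩ S).ncard} with h𝓑
      have hbr : IsBramble G 𝓑 := by
        constructor
        · rintro A ⟨X, v, hv, rfl, -⟩
          exact comp_connected G X v
        · rintro A ⟨X, v, hv, rfl, hA⟩ B ⟨X', v', hv', rfl, hB⟩
          left
          by_contra hcon
          rw [Set.not_nonempty_iff_eq_empty] at hcon
          have hdisj : Disjoint (comp G X v ∩ S) (comp G X' v' ∩ S) := by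
            rw [Set.disjoint_left]
            rintro x ⟨hx1, hx2⟩ ⟨hx3, -⟩
            exact (Set.eq_empty_iff_forall_notMem.mp hcon x) ⟨hx1, hx3⟩
          have hun := Set.ncard_union_eq hdisj (Set.toFinite _) (Set.toFinite _)
          have hsub : (comp G X v ∩ S) ∪ (comp G X' v' ∩ S) ⊆ S := by
            rintro x (⟨-, hx⟩ | ⟨-, hx⟩) <;> exact hx
          have hle := Set.ncard_le_ncard hsub S.toFinite
          omega
      have horder : k ≤ brambleOrder 𝓑 := by
        have hMne : {n | ∃ S' : Set V, IsHitting 𝓑 S' ∧ S'.ncard = n}.Nonempty := by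
          refine ⟨Set.univ.ncard, Set.univ, ?_, rfl⟩
          rintro A ⟨X, v, hv, rfl, -⟩
          exact ⟨v, Set.mem_univ v, mem_comp_self G X v⟩
        refine le_csInf hMne ?_
        rintro m ⟨S', hS', rfl⟩
        by_contra hm
        push_neg at hm
        obtain ⟨v, hv, hbig⟩ := hS S' hm
        have hAm : comp G S' v ∈ 𝓑 := ⟨S', v, hv, rfl, hbig⟩
        obtain ⟨x, hx1, hx2⟩ := hS' _ hAm
        exact comp_not_mem_X G hv hx2 hx1
      refine horder.trans (le_csSup (brambleNumber_bddAbove G) ?_)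
      exact ⟨𝓑, hbr, rfl⟩
    · rw [Set.not_nonempty_iff_eq_empty] at hne
      rw [linkedness, hne, csSup_empty]
      exact Nat.zero_le _
  · -- bn(G) ≤ 2·link(G)
    by_cases hne : {n | ∃ 𝓑 : Set (Set V), IsBramble G 𝓑 ∧ brambleOrder 𝓑 = n}.Nonempty
    · refine csSup_le hne ?_
      rintro n ⟨𝓑, hbr, rfl⟩
      rcases Nat.eq_zero_or_pos (brambleOrder 𝓑) with h0 | hpos
      · omega
      · have hMne : {m | ∃ S : Set V, IsHitting 𝓑 S ∧ S.ncard = m}.Nonempty := by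
          refine ⟨Set.univ.ncard, Set.univ, ?_, rfl⟩
          intro A hA
          rw [Set.univ_inter]
          exact Set.nonempty_coe_sort.mp (hbr.1 A hA).nonempty
        obtain ⟨S, hSh, hScard⟩ :
            ∃ S : Set V, IsHitting 𝓑 S ∧ S.ncard = brambleOrder 𝓑 :=
          Nat.sInf_mem hMne
        set k := (brambleOrder 𝓑 + 1) / 2 with hkdef
        have hlink : IsLinked G k S := by
          intro X hX
          by_contra hcon
          push_neg at hcon
          have hXn : X.ncard < brambleOrder 𝓑 := by omega
          have hXnothit : ¬ IsHitting 𝓑 X := by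
            intro h
            have := Nat.sInf_le (s := {m | ∃ S' : Set V, IsHitting 𝓑 S' ∧ S'.ncard = m})
              ⟨X, h, rfl⟩
            have h2 : brambleOrder 𝓑 ≤ X.ncard := this
            omega
          unfold IsHitting at hXnothit
          push_neg at hXnothit
          obtain ⟨A, hA, hAX⟩ := hXnothit
          have hAX' : ∀ a ∈ A, a ∉ X := fun a ha hx =>
            (Set.eq_empty_iff_forall_notMem.mp hAX a) ⟨hx, ha⟩
          obtain ⟨v, hvA⟩ : A.Nonempty := Set.nonempty_coe_sort.mp (hbr.1 A hA).nonempty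
          have hvX := hAX' v hvA
          have hS'' : IsHitting 𝓑 (X ∪ (S ∩ comp G X v)) := by
            intro B hB
            by_cases hBX : (X ∩ B).Nonempty
            · obtain ⟨x, hx⟩ := hBX
              exact ⟨x, Or.inl hx.1, hx.2⟩
            · rw [Set.not_nonempty_iff_eq_empty] at hBX
              have hBX' : ∀ b ∈ B, b ∉ X := fun b hb hx =>
                (Set.eq_empty_iff_forall_notMem.mp hBX b) ⟨hx, hb⟩
              have hb : ∃ b ∈ B, b ∈ comp G X v := by
                rcases hbr.2 A hA B hB with (⟨x, hx⟩ | ⟨a, ha, b, hbm, hadj⟩)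
                · exact ⟨x, hx.2, subset_comp G (hbr.1 A hA) hAX' hvA hx.1⟩
                · refine ⟨b, hbm, ?_⟩
                  have hac : a ∈ comp G X v := subset_comp G (hbr.1 A hA) hAX' hvA ha
                  have hadj' : (delVerts G X).Adj a b := ⟨hadj, hAX' a ha, hBX' b hbm⟩
                  exact Reachable.trans hac hadj'.reachable
              obtain ⟨b, hbB, hbc⟩ := hb
              have hBsub : B ⊆ comp G X v := by
                intro b' hb'
                have : b' ∈ comp G X b := subset_comp G (hbr.1 B hB) hBX' hbB hb'
                exact Reachable.trans hbc this
              obtain ⟨s, hs1, hs2⟩ := hSh B hB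
              exact ⟨s, Or.inr ⟨hs1, hBsub hs2⟩, hs2⟩
          have h1 : brambleOrder 𝓑 ≤ (X ∪ (S ∩ comp G X v)).ncard :=
            Nat.sInf_le ⟨_, hS'', rfl⟩
          have h2 : (X ∪ (S ∩ comp G X v)).ncard ≤ X.ncard + (S ∩ comp G X v).ncard :=
            Set.ncard_union_le _ _
          have h3 : 2 * (comp G X v ∩ S).ncard ≤ S.ncard := hcon v hvX
          rw [Set.inter_comm (comp G X v) S] at h3
          omega
        have hk : k ≤ linkedness G :=
          le_csSup (linkedness_bddAbove G) ⟨by omega, S, hlink⟩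
        omega
    · rw [Set.not_nonempty_iff_eq_empty] at hne
      rw [brambleNumber, hne, csSup_empty]
      exact Nat.zero_le _

end TWPaper
end
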